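/- Let $(\tilde{u}_i)_{i=1}^n$ be exchangeable real random variables, $\sigma > 0$, $\alpha \in (0,1)$, and let $\tilde{q}_{n,\alpha}$ be the empirical $\alpha$-quantile of $\tilde{u}_1, \dots, \tilde{u}_n$ (i.e., $\tilde{q}_{n,\alpha} = \tilde{F}_n^{\dagger}(\alpha)$ with $\tilde{F}_n$ the empirical distribution function and $F^\dagger(t) = \inf\{u : F(u) \ge t\}$). Suppose there is a continuous, strictly increasing distribution function $F$ with unique $\alpha$-quantile $q_\alpha$ such that for every $\varepsilon>0$, (a) $\mathbb{P}(\tilde{u}_1 / \sigma \le q_\alpha + \varepsilon) \to F(q_\alpha + \varepsilon)$ and $\mathbb{P}(\tilde{u}_1/\sigma \le q_\alpha - \varepsilon) \to F(q_\alpha - \varepsilon)$, and (b) $\mathrm{Cov}(\mathbf{1}\{\tilde{u}_1/\sigma > q_\alpha + \varepsilon\}, \mathbf{1}\{\tilde{u}_2/\sigma > q_\alpha + \varepsilon\}) \to 0$ and $\mathrm{Cov}(\mathbf{1}\{\tilde{u}_1/\sigma \le q_\alpha - \varepsilon\}, \mathbf{1}\{\tilde{u}_2/\sigma \le q_\alpha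 - \varepsilon\}) \to 0$. Then $\tilde{q}_{n,\alpha}/\sigma \to q_\alpha$ in probability as $n \to \infty$. -/

import Mathlib

open MeasureTheory ProbabilityTheory Filter Topology
open scoped Classical
set_option linter.unusedSectionVars false
set_option linter.unusedTactic false
set_option maxHeartbeats 1000000

/-- Empirical distribution function of the first `n` of the variables `u' n i`. -/
noncomputable def empCdf (n : ℕ) (x : ℕ → ℝ) (t : ℝ) : ℝ :=
  (∑ i ∈ Finset.range n, if x i ≤ t then (1 : ℝ) else 0) / n

/-- Empirical `α`-quantile `F̃ₙ†(α) = inf{u : F̃ₙ(u) ≥ α}`. -/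
noncomputable def empQuantile (n : ℕ) (x : ℕ → ℝ) (α : ℝ) : ℝ :=
  sInf {u : ℝ | α ≤ empCdf n x u}

section helpers

lemma s8_empCdf_mono (n : ℕ) (x : ℕ → ℝ) {t₁ t₂ : ℝ} (h : t₁ ≤ t₂) :
    empCdf n x t₁ ≤ empCdf n x t₂ := by
  unfold empCdf
  rw [div_eq_mul_inv, div_eq_mul_inv]
  refine mul_le_mul_of_nonneg_right (Finset.sum_le_sum fun i _ => ?_) (by positivity)
  split_ifs with h1 h2 <;> first | rfl | linarith

lemma s8_quantile_gt (n : ℕ) (hn : 1 ≤ n) (x : ℕ → ℝ) (α t : ℝ) (hα : 0 < α)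
    (h : t < empQuantile n x α) : empCdf n x t < α := by
  by_contra hc
  push_neg at hc
  have hbdd : BddBelow {u : ℝ | α ≤ empCdf n x u} := by
    refine ⟨(Finset.range n).inf' (by simp; omega) x, fun u hu => ?_⟩
    by_contra hlt
    push_neg at hlt
    have : empCdf n x u = 0 := by
      unfold empCdf
      rw [Finset.sum_eq_zero, zero_div]
      intro i hi
      rw [if_neg]
      exact not_le.2 (lt_of_lt_of_le hlt (Finset.inf'_le x hi))
    simp only [Set.mem_setOf_eq, this] at hu
    linarith
  exact absurd (csInf_le hbdd hc) (not_le.2 h)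

lemma s8_quantile_lt (n : ℕ) (hn : 1 ≤ n) (x : ℕ → ℝ) (α t : ℝ) (hα1 : α ≤ 1)
    (h : empQuantile n x α < t) : α ≤ empCdf n x t := by
  have hne : {u : ℝ | α ≤ empCdf n x u}.Nonempty := by
    refine ⟨(Finset.range n).sup' (by simp; omega) x, ?_⟩
    have : empCdf n x ((Finset.range n).sup' (by simp; omega) x) = 1 := by
      unfold empCdf
      rw [Finset.sum_congr rfl (fun i hi => if_pos (Finset.le_sup' x hi))]
      simp
      omega
    simpa [Set.mem_setOf_eq, this] using hα1
  obtain ⟨u, hu, hut⟩ := exists_lt_of_csInf_lt hne h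
  exact le_trans hu (s8_empCdf_mono n x hut.le)

variable {Ω : Type*} [MeasurableSpace Ω] (P : Measure Ω) [IsProbabilityMeasure P]

lemma s8_bdd_integrable' {f : Ω → ℝ} (hf : Measurable f) (M : ℝ) (h : ∀ ω, |f ω| ≤ M) :
    Integrable f P :=
  Integrable.mono' (integrable_const M) hf.aestronglyMeasurable (ae_of_all _ h)

lemma s8_integral_ite (φ : Ω → Prop) [∀ ω, Decidable (φ ω)] (h : MeasurableSet {ω | φ ω}) :
    ∫ ω, (if φ ω then (1:ℝ) else 0) ∂P = (P {ω | φ ω}).toReal := by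
  have h1 : (fun ω => if φ ω then (1:ℝ) else 0) = {ω | φ ω}.indicator 1 := by
    ext ω; simp [Set.indicator_apply]
  rw [h1, integral_indicator_one h]
  rfl

lemma s8_ind_meas (φ : Ω → Prop) [∀ ω, Decidable (φ ω)] (h : MeasurableSet {ω | φ ω}) :
    Measurable (fun ω => if φ ω then (1:ℝ) else 0) :=
  Measurable.ite h measurable_const measurable_const

lemma s8_ind_int (φ : Ω → Prop) [∀ ω, Decidable (φ ω)] (h : MeasurableSet {ω | φ ω}) :
    Integrable (fun ω => if φ ω then (1:ℝ) else 0) P := by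
  refine s8_bdd_integrable' P (s8_ind_meas φ h) 1 fun ω => ?_
  split_ifs <;> simp

lemma s8_secmoment (n : ℕ) (hn : 1 ≤ n) (A : ℕ → Ω → Prop) [∀ i ω, Decidable (A i ω)]
    (hA : ∀ i, MeasurableSet {ω | A i ω}) (p r : ℝ)
    (hp : ∀ i < n, (P {ω | A i ω}).toReal = p)
    (hr : ∀ i < n, ∀ j < n, i ≠ j → (P {ω | A i ω ∧ A j ω}).toReal = r) :
    ∫ ω, ((∑ i ∈ Finset.range n, (if A i ω then (1:ℝ) else 0)) / n - p)^2 ∂P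
      = (r - p^2) + (p - r)/n := by
  have hn0 : (n:ℝ) ≠ 0 := Nat.cast_ne_zero.2 (by omega)
  set g : ℕ → Ω → ℝ := fun i ω => if A i ω then (1:ℝ) else 0 with hg
  have hInt : ∀ i, Integrable (g i) P := fun i => s8_ind_int P (A i) (hA i)
  have hIntgg : ∀ i j, Integrable (fun ω => g i ω * g j ω) P := by
    intro i j
    refine s8_bdd_integrable' P ((s8_ind_meas (A i) (hA i)).mul (s8_ind_meas (A j) (hA j)))
      1 fun ω => ?_
    simp only [hg]
    split_ifs <;> norm_num
  have hgg : ∀ i < n, ∀ j < n, ∫ ω, g i ω * g j ω ∂P = if i = j then p else r := by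
    intro i hi j hj
    by_cases hij : i = j
    · subst hij
      simp only [if_pos rfl]
      have : ∀ ω, g i ω * g i ω = g i ω := by
        intro ω; simp only [hg]; split_ifs <;> norm_num
      simp only [this]
      rw [hg]; rw [s8_integral_ite P (A i) (hA i)]
      exact hp i hi
    · rw [if_neg hij]
      have : ∀ ω, g i ω * g j ω = if A i ω ∧ A j ω then (1:ℝ) else 0 := by
        intro ω; simp only [hg]
        by_cases h1 : A i ω <;> by_cases h2 : A j ω <;> simp [h1, h2]
      simp only [this]
      rw [s8_integral_ite P (fun ω => A i ω ∧ A j ω) ((hA i).inter (hA j))]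
      exact hr i hi j hj hij
  have key : ∀ ω, ((∑ i ∈ Finset.range n, g i ω) / n - p)^2
      = (∑ i ∈ Finset.range n, ∑ j ∈ Finset.range n, g i ω * g j ω) / ((n:ℝ)*n)
        - (2*p/n) * (∑ i ∈ Finset.range n, g i ω) + p^2 := by
    intro ω
    rw [Finset.sum_mul_sum (Finset.range n) (Finset.range n) (g · ω) (g · ω) |>.symm]
    field_simp
    ring
  show ∫ ω, ((∑ i ∈ Finset.range n, g i ω) / n - p)^2 ∂P = _
  simp only [key]
  have hIntSum : Integrable (fun ω => ∑ i ∈ Finset.range n, g i ω) P :=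
    integrable_finset_sum _ fun i _ => hInt i
  have hIntDD : Integrable
      (fun ω => ∑ i ∈ Finset.range n, ∑ j ∈ Finset.range n, g i ω * g j ω) P :=
    integrable_finset_sum _ fun i _ => integrable_finset_sum _ fun j _ => hIntgg i j
  rw [integral_add, integral_sub, integral_div, integral_finset_sum, integral_const_mul,
    integral_finset_sum, integral_const]
  · have h1 : ∀ i ∈ Finset.range n,
        ∫ ω, ∑ j ∈ Finset.range n, g i ω * g j ω ∂P = (n:ℝ)*r + (p - r) := by
      intro i hi
      rw [integral_finset_sum _ fun j _ => hIntgg i j]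
      rw [Finset.sum_congr rfl (fun j hj => hgg i (Finset.mem_range.1 hi) j (Finset.mem_range.1 hj))]
      have : ∀ j ∈ Finset.range n, (if i = j then p else r) = r + (if i = j then p - r else 0) := by
        intro j _; split_ifs <;> ring
      rw [Finset.sum_congr rfl this, Finset.sum_add_distrib, Finset.sum_const,
        Finset.sum_ite_eq, if_pos hi, Finset.card_range]
      ring
    rw [Finset.sum_congr rfl h1, Finset.sum_const, Finset.card_range]
    have h2 : ∀ i ∈ Finset.range n, ∫ ω, g i ω ∂P = p := by
      intro i hi
      rw [hg]; rw [s8_integral_ite P (A i) (hA i)]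
      exact hp i (Finset.mem_range.1 hi)
    rw [Finset.sum_congr rfl h2, Finset.sum_const, Finset.card_range]
    simp only [measure_univ, probReal_univ, ENNReal.toReal_one, smul_eq_mul, nsmul_eq_mul, one_mul]
    field_simp
    ring
  · intro j _; exact hInt j
  · intro i _; exact integrable_finset_sum _ fun j _ => hIntgg i j
  · exact hIntDD.div_const _
  · exact (hIntSum.const_mul _)
  · exact (hIntDD.div_const _).sub (hIntSum.const_mul _)
  · exact integrable_const _

lemma s8_cheb (f : Ω → ℝ) (hf : Measurable f) (δ : ℝ) (hδ : 0 < δ) (M : ℝ)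
    (hM : ∀ ω, |f ω| ≤ M) :
    (P {ω | δ ≤ |f ω|}).toReal ≤ (∫ ω, (f ω)^2 ∂P) / δ^2 := by
  have hint : Integrable (fun ω => (f ω)^2) P := by
    refine s8_bdd_integrable' P (hf.pow_const 2) (M^2) fun ω => ?_
    rw [abs_pow, ← sq_abs M]
    exact pow_le_pow_left₀ (abs_nonneg _) ((hM ω).trans (le_abs_self M)) 2
  have hmarkov := mul_meas_ge_le_integral_of_nonneg
    (ae_of_all P (fun ω => sq_nonneg (f ω))) hint (δ^2)
  have hsub : {ω | δ ≤ |f ω|} ⊆ {ω | δ^2 ≤ (f ω)^2} := by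
    intro ω hω
    simp only [Set.mem_setOf_eq] at *
    calc δ^2 ≤ |f ω|^2 := pow_le_pow_left₀ hδ.le hω 2
    _ = (f ω)^2 := sq_abs _
  have hmono : (P {ω | δ ≤ |f ω|}).toReal ≤ (P {ω | δ^2 ≤ (f ω)^2}).toReal :=
    ENNReal.toReal_mono (measure_ne_top _ _) (measure_mono hsub)
  rw [le_div_iff₀ (by positivity)]
  calc (P {ω | δ ≤ |f ω|}).toReal * δ^2 ≤ (P {ω | δ^2 ≤ (f ω)^2}).toReal * δ^2 := by
        exact mul_le_mul_of_nonneg_right hmono (by positivity)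
  _ = δ^2 * (P {ω | δ^2 ≤ (f ω)^2}).toReal := mul_comm _ _
  _ ≤ ∫ ω, (f ω)^2 ∂P := hmarkov

lemma s8_exch1 (u : ℕ → Ω → ℝ) (hm : ∀ i, Measurable (u i)) (n : ℕ)
    (hexch : ∀ π : Equiv.Perm ℕ, (∀ k, n ≤ k → π k = k) →
      Measure.map (fun ω => (fun i : Fin n => u (π i) ω)) P =
        Measure.map (fun ω => (fun i : Fin n => u i ω)) P)
    (i : ℕ) (hi : i < n) (s : Set ℝ) (hs : MeasurableSet s) :
    P (u i ⁻¹' s) = P (u 0 ⁻¹' s) := by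
  have h0 : (0:ℕ) < n := lt_of_le_of_lt (Nat.zero_le i) hi
  set i0 : Fin n := ⟨0, h0⟩ with hi0
  have hS : MeasurableSet {v : Fin n → ℝ | v i0 ∈ s} := measurable_pi_apply i0 hs
  have hfix : ∀ k, n ≤ k → (Equiv.swap 0 i) k = k := fun k hk =>
    Equiv.swap_apply_of_ne_of_ne (by omega) (by omega)
  have hπ := hexch (Equiv.swap 0 i) hfix
  have hmeas1 : Measurable (fun ω => (fun j : Fin n => u ((Equiv.swap 0 i) j) ω)) :=
    measurable_pi_lambda _ fun j => hm _
  have hmeas2 : Measurable (fun ω => (fun j : Fin n => u j ω)) :=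
    measurable_pi_lambda _ fun j => hm _
  have := congrArg (fun μ : Measure (Fin n → ℝ) => μ {v | v i0 ∈ s}) hπ
  simp only [Measure.map_apply hmeas1 hS, Measure.map_apply hmeas2 hS] at this
  have e1 : ((fun ω => (fun j : Fin n => u ((Equiv.swap 0 i) j) ω)) ⁻¹' {v | v i0 ∈ s})
      = u i ⁻¹' s := by
    ext ω; simp [hi0, Equiv.swap_apply_left]
  have e2 : ((fun ω => (fun j : Fin n => u j ω)) ⁻¹' {v | v i0 ∈ s}) = u 0 ⁻¹' s := by
    ext ω; simp [hi0]
  rwa [e1, e2] at this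

lemma s8_exch2 (u : ℕ → Ω → ℝ) (hm : ∀ i, Measurable (u i)) (n : ℕ) (hn : 2 ≤ n)
    (hexch : ∀ π : Equiv.Perm ℕ, (∀ k, n ≤ k → π k = k) →
      Measure.map (fun ω => (fun i : Fin n => u (π i) ω)) P =
        Measure.map (fun ω => (fun i : Fin n => u i ω)) P)
    (i j : ℕ) (hi : i < n) (hj : j < n) (hij : i ≠ j) (s : Set (ℝ × ℝ))
    (hs : MeasurableSet s) :
    P ((fun ω => (u i ω, u j ω)) ⁻¹' s) = P ((fun ω => (u 0 ω, u 1 ω)) ⁻¹' s) := by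
  have h0 : (0:ℕ) < n := by omega
  have h1 : (1:ℕ) < n := by omega
  set i0 : Fin n := ⟨0, h0⟩ with hi0
  set i1 : Fin n := ⟨1, h1⟩ with hi1
  set j₀ : ℕ := (Equiv.swap 0 i) j with hj₀
  have hj₀0 : j₀ ≠ 0 := fun hc =>
    hij ((Equiv.swap 0 i).injective (hc.trans (Equiv.swap_apply_right 0 i).symm)).symm
  have hj₀n : j₀ < n := by
    rcases eq_or_ne j 0 with h | h
    · rw [hj₀, h, Equiv.swap_apply_left]; exact hi
    · rwa [hj₀, Equiv.swap_apply_of_ne_of_ne h (Ne.symm hij)]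
  set π : Equiv.Perm ℕ := Equiv.swap 0 i * Equiv.swap 1 j₀ with hπdef
  have hπ0 : π 0 = i := by
    rw [hπdef, Equiv.Perm.mul_apply,
      Equiv.swap_apply_of_ne_of_ne (by omega) (Ne.symm hj₀0), Equiv.swap_apply_left]
  have hπ1 : π 1 = j := by
    rw [hπdef, Equiv.Perm.mul_apply, Equiv.swap_apply_left, hj₀, Equiv.swap_apply_self]
  have hfix : ∀ k, n ≤ k → π k = k := by
    intro k hk
    rw [hπdef, Equiv.Perm.mul_apply,
      Equiv.swap_apply_of_ne_of_ne (show k ≠ 1 by omega) (show k ≠ j₀ by omega),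
      Equiv.swap_apply_of_ne_of_ne (show k ≠ 0 by omega) (show k ≠ i by omega)]
  have hS : MeasurableSet {v : Fin n → ℝ | (v i0, v i1) ∈ s} :=
    ((measurable_pi_apply i0).prodMk (measurable_pi_apply i1)) hs
  have hπm := hexch π hfix
  have hmeas1 : Measurable (fun ω => (fun k : Fin n => u (π k) ω)) :=
    measurable_pi_lambda _ fun k => hm _
  have hmeas2 : Measurable (fun ω => (fun k : Fin n => u k ω)) :=
    measurable_pi_lambda _ fun k => hm _
  have key := congrArg (fun μ : Measure (Fin n → ℝ) => μ {v | (v i0, v i1) ∈ s}) hπm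
  simp only [Measure.map_apply hmeas1 hS, Measure.map_apply hmeas2 hS] at key
  have e1 : ((fun ω => (fun k : Fin n => u (π k) ω)) ⁻¹' {v | (v i0, v i1) ∈ s})
      = (fun ω => (u i ω, u j ω)) ⁻¹' s := by
    ext ω; simp [hi0, hi1, hπ0, hπ1]
  have e2 : ((fun ω => (fun k : Fin n => u k ω)) ⁻¹' {v | (v i0, v i1) ∈ s})
      = (fun ω => (u 0 ω, u 1 ω)) ⁻¹' s := by
    ext ω; simp [hi0, hi1]
  rwa [e1, e2] at key

lemma s8_core (σ : ℝ) (hσ : 0 < σ) (c : ℝ)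
    (u' : (n : ℕ) → ℕ → Ω → ℝ) (hmeas : ∀ n i, Measurable (u' n i))
    (hexch : ∀ n, ∀ π : Equiv.Perm ℕ, (∀ i, n ≤ i → π i = i) →
      Measure.map (fun ω => (fun i : Fin n => u' n (π i) ω)) P =
        Measure.map (fun ω => (fun i : Fin n => u' n i ω)) P)
    (n : ℕ) (hn : 2 ≤ n) (δ : ℝ) (hδ : 0 < δ) :
    (P {ω | δ ≤ |empCdf n (fun i => u' n i ω) (c*σ) -
        (P {ω' | u' n 0 ω' / σ ≤ c}).toReal|}).toReal
      ≤ (|(P {ω' | u' n 0 ω' / σ ≤ c ∧ u' n 1 ω' / σ ≤ c}).toReal -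
          (P {ω' | u' n 0 ω' / σ ≤ c}).toReal * (P {ω' | u' n 1 ω' / σ ≤ c}).toReal| + 1/n)
         / δ^2 := by
  have hn1 : (1:ℕ) ≤ n := by omega
  set p := (P {ω' | u' n 0 ω' / σ ≤ c}).toReal with hpdef
  set q := (P {ω' | u' n 1 ω' / σ ≤ c}).toReal with hqdef
  set r := (P {ω' | u' n 0 ω' / σ ≤ c ∧ u' n 1 ω' / σ ≤ c}).toReal with hrdef
  have hAm : ∀ i, MeasurableSet {ω | u' n i ω / σ ≤ c} :=
    fun i => measurableSet_le ((hmeas n i).div_const σ) measurable_const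
  have hsm : MeasurableSet {x : ℝ | x / σ ≤ c} :=
    measurableSet_le (measurable_id.div_const σ) measurable_const
  have hp' : ∀ i < n, (P {ω | u' n i ω / σ ≤ c}).toReal = p := by
    intro i hi
    rw [hpdef]
    exact congrArg ENNReal.toReal
      (s8_exch1 P (u' n) (hmeas n) n (hexch n) i hi {x | x / σ ≤ c} hsm)
  have hqp : q = p := hp' 1 (by omega)
  have hs2 : MeasurableSet {y : ℝ × ℝ | y.1 / σ ≤ c ∧ y.2 / σ ≤ c} :=
    (measurableSet_le (measurable_fst.div_const σ) measurable_const).inter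
      (measurableSet_le (measurable_snd.div_const σ) measurable_const)
  have hr' : ∀ i < n, ∀ j < n, i ≠ j →
      (P {ω | u' n i ω / σ ≤ c ∧ u' n j ω / σ ≤ c}).toReal = r := by
    intro i hi j hj hij
    rw [hrdef]
    exact congrArg ENNReal.toReal
      (s8_exch2 P (u' n) (hmeas n) n hn (hexch n) i j hi hj hij
        {y : ℝ × ℝ | y.1 / σ ≤ c ∧ y.2 / σ ≤ c} hs2)
  have hp1 : p ≤ 1 := by
    rw [hpdef]
    exact ENNReal.toReal_le_of_le_ofReal one_pos.le (by simpa using prob_le_one)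
  have hr0 : 0 ≤ r := ENNReal.toReal_nonneg
  -- the empirical mean as predicate sum
  have hfe : ∀ ω, empCdf n (fun i => u' n i ω) (c*σ)
      = (∑ i ∈ Finset.range n, if u' n i ω / σ ≤ c then (1:ℝ) else 0) / n := by
    intro ω
    unfold empCdf
    congr 1
    refine Finset.sum_congr rfl fun i _ => ?_
    by_cases h : u' n i ω / σ ≤ c
    · rw [if_pos ((div_le_iff₀ hσ).1 h), if_pos h]
    · rw [if_neg (fun hc => h ((div_le_iff₀ hσ).2 hc)), if_neg h]
  set f : Ω → ℝ := fun ω => empCdf n (fun i => u' n i ω) (c*σ) - p with hfdef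
  have hfm : Measurable f := by
    apply Measurable.sub _ measurable_const
    unfold empCdf
    exact (Finset.measurable_sum _ fun i _ =>
      Measurable.ite (measurableSet_le (hmeas n i) measurable_const)
        measurable_const measurable_const).div_const _
  have hSbd : ∀ ω, 0 ≤ empCdf n (fun i => u' n i ω) (c*σ) ∧
      empCdf n (fun i => u' n i ω) (c*σ) ≤ 1 := by
    intro ω
    rw [hfe ω]
    constructor
    · apply div_nonneg _ (Nat.cast_nonneg n)
      exact Finset.sum_nonneg fun i _ => by split_ifs <;> norm_num
    · rw [div_le_one (by positivity)]
      calc (∑ i ∈ Finset.range n, if u' n i ω / σ ≤ c then (1:ℝ) else 0)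
          ≤ ∑ _i ∈ Finset.range n, (1:ℝ) :=
            Finset.sum_le_sum fun i _ => by split_ifs <;> norm_num
      _ = n := by simp
  have hfbd : ∀ ω, |f ω| ≤ 1 + |p| := by
    intro ω
    rw [hfdef]
    have h1 := (hSbd ω).1
    have h2 := (hSbd ω).2
    rw [abs_sub_comm]
    calc |p - empCdf n (fun i => u' n i ω) (c*σ)| ≤ _ := abs_sub _ _
    _ ≤ 1 + |p| := by
        rw [add_comm]
        gcongr
        rw [abs_le]; constructor <;> linarith
  have hcheb := s8_cheb P f hfm δ hδ (1 + |p|) hfbd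
  have hsec := s8_secmoment P n hn1 (fun i ω => u' n i ω / σ ≤ c) hAm p r hp' hr'
  have hint : ∫ ω, (f ω)^2 ∂P = (r - p^2) + (p - r)/n := by
    rw [← hsec]
    apply integral_congr_ae
    filter_upwards with ω
    rw [hfdef]
    simp only [hfe ω]
  rw [hint] at hcheb
  refine hcheb.trans ?_
  have hnum : (r - p^2) + (p - r)/n ≤ |r - p * q| + 1/n := by
    have e1 : r - p^2 ≤ |r - p * q| := by
      rw [hqp]
      calc r - p^2 = r - p * p := by ring
      _ ≤ |r - p * p| := le_abs_self _
    have e2 : (p - r)/n ≤ 1/n := by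
      have hnpos : (0:ℝ) < n := by exact_mod_cast Nat.lt_of_lt_of_le Nat.zero_lt_one hn1
      rw [div_le_div_iff₀ hnpos hnpos]
      nlinarith
    linarith
  gcongr

lemma s8_cov' (φ ψ : Ω → Prop) [∀ ω, Decidable (φ ω)] [∀ ω, Decidable (ψ ω)]
    (hφ : MeasurableSet {ω | φ ω}) (hψ : MeasurableSet {ω | ψ ω}) :
    ∫ ω, ((if φ ω then (1:ℝ) else 0) - ∫ ω', (if φ ω' then (1:ℝ) else 0) ∂P) *
         ((if ψ ω then (1:ℝ) else 0) - ∫ ω', (if ψ ω' then (1:ℝ) else 0) ∂P) ∂P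
      = (P {ω | φ ω ∧ ψ ω}).toReal - (P {ω | φ ω}).toReal * (P {ω | ψ ω}).toReal := by
  set p := (P {ω | φ ω}).toReal with hp
  set q := (P {ω | ψ ω}).toReal with hq
  have hand : MeasurableSet {ω | φ ω ∧ ψ ω} := hφ.inter hψ
  rw [s8_integral_ite P φ hφ, s8_integral_ite P ψ hψ]
  have key : ∀ ω, ((if φ ω then (1:ℝ) else 0) - p) * ((if ψ ω then (1:ℝ) else 0) - q)
      = (if φ ω ∧ ψ ω then (1:ℝ) else 0) - q * (if φ ω then (1:ℝ) else 0)
        - p * (if ψ ω then (1:ℝ) else 0) + p * q := by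
    intro ω; by_cases h1 : φ ω <;> by_cases h2 : ψ ω <;> simp [h1, h2] <;> ring
  rw [← hp, ← hq]
  simp only [key]
  rw [integral_add, integral_sub, integral_sub,
    s8_integral_ite P (fun ω => φ ω ∧ ψ ω) hand,
    integral_const_mul, integral_const_mul, s8_integral_ite P φ hφ, s8_integral_ite P ψ hψ,
    integral_const]
  · simp; ring
  · exact s8_ind_int P _ hand
  · exact (s8_ind_int P φ hφ).const_mul q
  · exact ((s8_ind_int P _ hand).sub ((s8_ind_int P φ hφ).const_mul q))
  · exact (s8_ind_int P ψ hψ).const_mul p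
  · exact (((s8_ind_int P _ hand).sub ((s8_ind_int P φ hφ).const_mul q)).sub
      ((s8_ind_int P ψ hψ).const_mul p))
  · exact integrable_const _

lemma s8_cov_compl (φ ψ : Ω → Prop) [∀ ω, Decidable (φ ω)] [∀ ω, Decidable (ψ ω)]
    (hφ : MeasurableSet {ω | φ ω}) (hψ : MeasurableSet {ω | ψ ω}) :
    ∫ ω, ((if φ ω then (0:ℝ) else 1) - ∫ ω', (if φ ω' then (0:ℝ) else 1) ∂P) *
         ((if ψ ω then (0:ℝ) else 1) - ∫ ω', (if ψ ω' then (0:ℝ) else 1) ∂P) ∂P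
      = (P {ω | φ ω ∧ ψ ω}).toReal - (P {ω | φ ω}).toReal * (P {ω | ψ ω}).toReal := by
  have e1 : ∀ (χ : Ω → Prop) [∀ ω, Decidable (χ ω)], MeasurableSet {ω | χ ω} →
      ∫ ω', (if χ ω' then (0:ℝ) else 1) ∂P = 1 - (P {ω | χ ω}).toReal := by
    intro χ _ hχ
    have : ∀ ω', (if χ ω' then (0:ℝ) else 1) = 1 - (if χ ω' then (1:ℝ) else 0) := by
      intro ω'; split_ifs <;> norm_num
    simp only [this]
    rw [integral_sub (integrable_const _) (s8_ind_int P χ hχ), integral_const,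
      s8_integral_ite P χ hχ]
    simp
  rw [e1 φ hφ, e1 ψ hψ]
  have hc := s8_cov' P φ ψ hφ hψ
  rw [s8_integral_ite P φ hφ, s8_integral_ite P ψ hψ] at hc
  rw [← hc]
  apply integral_congr_ae
  filter_upwards with ω
  by_cases h1 : φ ω <;> by_cases h2 : ψ ω <;> simp [h1, h2] <;> ring

end helpers

/-- consistency of the empirical quantile of a triangular array of exchangeable
random variables, given convergence of the one-dimensional marginals near the population
quantile and vanishing pairwise indicator covariances. -/

theorem stmt8
    {Ω : Type*} [MeasurableSpace Ω] (P : Measure Ω) [IsProbabilityMeasure P]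
    (σ : ℝ) (hσ : 0 < σ) (α : ℝ) (hα : α ∈ Set.Ioo (0 : ℝ) 1)
    (F : ℝ → ℝ) (hFcont : Continuous F) (hFmono : StrictMono F)
    (qα : ℝ) (hq : F qα = α)
    (u' : (n : ℕ) → ℕ → Ω → ℝ) (hmeas : ∀ n i, Measurable (u' n i))
    -- exchangeability of (u' n 0, …, u' n (n-1)) for each n
    (hexch : ∀ n, ∀ π : Equiv.Perm ℕ, (∀ i, n ≤ i → π i = i) →
      Measure.map (fun ω => (fun i : Fin n => u' n (π i) ω)) P =
        Measure.map (fun ω => (fun i : Fin n => u' n i ω)) P)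
    -- (a) convergence of one-dimensional marginals at qα ± ε
    (ha : ∀ ε > (0 : ℝ),
      Tendsto (fun n => (P {ω | u' n 0 ω / σ ≤ qα + ε}).toReal) atTop (𝓝 (F (qα + ε))) ∧
      Tendsto (fun n => (P {ω | u' n 0 ω / σ ≤ qα - ε}).toReal) atTop (𝓝 (F (qα - ε))))
    -- (b) vanishing pairwise indicator covariances
    (hb : ∀ ε > (0 : ℝ),
      Tendsto (fun n =>
        ∫ ω, ((if qα + ε < u' n 0 ω / σ then (1:ℝ) else 0) -
                ∫ ω', (if qα + ε < u' n 0 ω' / σ then (1:ℝ) else 0) ∂P) *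
             ((if qα + ε < u' n 1 ω / σ then (1:ℝ) else 0) -
                ∫ ω', (if qα + ε < u' n 1 ω' / σ then (1:ℝ) else 0) ∂P) ∂P)
        atTop (𝓝 0) ∧
      Tendsto (fun n =>
        ∫ ω, ((if u' n 0 ω / σ ≤ qα - ε then (1:ℝ) else 0) -
                ∫ ω', (if u' n 0 ω' / σ ≤ qα - ε then (1:ℝ) else 0) ∂P) *
             ((if u' n 1 ω / σ ≤ qα - ε then (1:ℝ) else 0) -
                ∫ ω', (if u' n 1 ω' / σ ≤ qα - ε then (1:ℝ) else 0) ∂P) ∂P)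
        atTop (𝓝 0)) :
    ∀ ε > (0 : ℝ),
      Tendsto (fun n =>
        (P {ω | ε < |empQuantile n (fun i => u' n i ω) α / σ - qα|}).toReal)
        atTop (𝓝 0) := by
  intro ε hε
  obtain ⟨hα0, hα1⟩ := hα
  have hFgt : α < F (qα + ε) := by rw [← hq]; exact hFmono (by linarith)
  have hFlt : F (qα - ε) < α := by rw [← hq]; exact hFmono (by linarith)
  set δp : ℝ := (F (qα + ε) - α) / 2 with hδpdef
  set δm : ℝ := (α - F (qα - ε)) / 2 with hδmdef
  have hδp0 : 0 < δp := by rw [hδpdef]; linarith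
  have hδm0 : 0 < δm := by rw [hδmdef]; linarith
  -- eventual bounds on the marginals
  have hev1 : ∀ᶠ n in atTop, α + δp ≤ (P {ω | u' n 0 ω / σ ≤ qα + ε}).toReal :=
    (ha ε hε).1.eventually_const_le (by rw [hδpdef]; linarith)
  have hev2 : ∀ᶠ n in atTop, (P {ω | u' n 0 ω / σ ≤ qα - ε}).toReal ≤ α - δm :=
    (ha ε hε).2.eventually_le_const (by rw [hδmdef]; linarith)
  -- covariance limits in set form
  have hAm1 : ∀ n i, MeasurableSet {ω | u' n i ω / σ ≤ qα + ε} :=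
    fun n i => measurableSet_le ((hmeas n i).div_const σ) measurable_const
  have hAm2 : ∀ n i, MeasurableSet {ω | u' n i ω / σ ≤ qα - ε} :=
    fun n i => measurableSet_le ((hmeas n i).div_const σ) measurable_const
  have flip : ∀ (t x : ℝ), (if t < x then (1:ℝ) else 0) = (if x ≤ t then (0:ℝ) else 1) := by
    intro t x
    rcases le_or_gt x t with h | h
    · rw [if_neg (not_lt.2 h), if_pos h]
    · rw [if_pos h, if_neg (not_le.2 h)]
  have hcov1 : Tendsto (fun n =>
      (P {ω' | u' n 0 ω' / σ ≤ qα + ε ∧ u' n 1 ω' / σ ≤ qα + ε}).toReal -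
        (P {ω' | u' n 0 ω' / σ ≤ qα + ε}).toReal *
          (P {ω' | u' n 1 ω' / σ ≤ qα + ε}).toReal) atTop (𝓝 0) := by
    refine (hb ε hε).1.congr fun n => ?_
    simp only [flip]
    exact s8_cov_compl P (fun ω => u' n 0 ω / σ ≤ qα + ε) (fun ω => u' n 1 ω / σ ≤ qα + ε)
      (hAm1 n 0) (hAm1 n 1)
  have hcov2 : Tendsto (fun n =>
      (P {ω' | u' n 0 ω' / σ ≤ qα - ε ∧ u' n 1 ω' / σ ≤ qα - ε}).toReal -
        (P {ω' | u' n 0 ω' / σ ≤ qα - ε}).toReal *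
          (P {ω' | u' n 1 ω' / σ ≤ qα - ε}).toReal) atTop (𝓝 0) := by
    refine (hb ε hε).2.congr fun n => ?_
    exact s8_cov' P (fun ω => u' n 0 ω / σ ≤ qα - ε) (fun ω => u' n 1 ω / σ ≤ qα - ε)
      (hAm2 n 0) (hAm2 n 1)
  -- the bounding sequence
  set B : ℕ → ℝ := fun n =>
    (|(P {ω' | u' n 0 ω' / σ ≤ qα + ε ∧ u' n 1 ω' / σ ≤ qα + ε}).toReal -
        (P {ω' | u' n 0 ω' / σ ≤ qα + ε}).toReal *
          (P {ω' | u' n 1 ω' / σ ≤ qα + ε}).toReal| + 1/n) / δp^2 +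
    (|(P {ω' | u' n 0 ω' / σ ≤ qα - ε ∧ u' n 1 ω' / σ ≤ qα - ε}).toReal -
        (P {ω' | u' n 0 ω' / σ ≤ qα - ε}).toReal *
          (P {ω' | u' n 1 ω' / σ ≤ qα - ε}).toReal| + 1/n) / δm^2 with hBdef
  have hB0 : Tendsto B atTop (𝓝 0) := by
    have l1 := ((hcov1.abs.add tendsto_one_div_atTop_nhds_zero_nat).div_const (δp^2)).add
      ((hcov2.abs.add tendsto_one_div_atTop_nhds_zero_nat).div_const (δm^2))
    have hlim : ((|(0:ℝ)| + 0)/δp^2 + ((|(0:ℝ)| + 0)/δm^2)) = 0 := by norm_num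
    rw [hBdef, ← hlim]
    exact l1
  -- eventual bound on the probability
  have hub : ∀ᶠ n in atTop, (P {ω | ε < |empQuantile n (fun i => u' n i ω) α / σ - qα|}).toReal
      ≤ B n := by
    filter_upwards [hev1, hev2, eventually_ge_atTop 2] with n h1 h2 hn2
    set x : Ω → ℕ → ℝ := fun ω i => u' n i ω with hxdef
    set Ep : Set Ω := {ω | δp ≤ |empCdf n (fun i => u' n i ω) ((qα + ε) * σ) -
        (P {ω' | u' n 0 ω' / σ ≤ qα + ε}).toReal|} with hEp
    set Em : Set Ω := {ω | δm ≤ |empCdf n (fun i => u' n i ω) ((qα - ε) * σ) -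
        (P {ω' | u' n 0 ω' / σ ≤ qα - ε}).toReal|} with hEm
    have hsub : {ω | ε < |empQuantile n (fun i => u' n i ω) α / σ - qα|} ⊆ Ep ∪ Em := by
      intro ω hω
      simp only [Set.mem_setOf_eq] at hω
      rcases lt_abs.1 hω with hgt | hlt
      · -- quantile too large
        left
        have hq1 : (qα + ε) * σ < empQuantile n (fun i => u' n i ω) α := by
          rw [← lt_div_iff₀ hσ]; linarith
        have hcdf := s8_quantile_gt n (by omega) (fun i => u' n i ω) α ((qα + ε) * σ)
          hα0 hq1
        rw [hEp]
        simp only [Set.mem_setOf_eq]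
        have : δp ≤ -(empCdf n (fun i => u' n i ω) ((qα + ε) * σ) -
            (P {ω' | u' n 0 ω' / σ ≤ qα + ε}).toReal) := by linarith
        exact this.trans (neg_le_abs _)
      · -- quantile too small
        right
        have hq1 : empQuantile n (fun i => u' n i ω) α < (qα - ε) * σ := by
          rw [← div_lt_iff₀ hσ]; linarith
        have hcdf := s8_quantile_lt n (by omega) (fun i => u' n i ω) α ((qα - ε) * σ)
          hα1.le hq1
        rw [hEm]
        simp only [Set.mem_setOf_eq]
        have : δm ≤ empCdf n (fun i => u' n i ω) ((qα - ε) * σ) -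
            (P {ω' | u' n 0 ω' / σ ≤ qα - ε}).toReal := by linarith
        exact this.trans (le_abs_self _)
    calc (P {ω | ε < |empQuantile n (fun i => u' n i ω) α / σ - qα|}).toReal
        ≤ (P Ep + P Em).toReal := by
          refine ENNReal.toReal_mono (ENNReal.add_ne_top.2 ⟨measure_ne_top _ _, measure_ne_top _ _⟩) ?_
          exact (measure_mono hsub).trans (measure_union_le _ _)
      _ = (P Ep).toReal + (P Em).toReal :=
          ENNReal.toReal_add (measure_ne_top _ _) (measure_ne_top _ _)
      _ ≤ B n := by
          rw [hBdef]
          exact add_le_add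
            (s8_core P σ hσ (qα + ε) u' hmeas hexch n hn2 δp hδp0)
            (s8_core P σ hσ (qα - ε) u' hmeas hexch n hn2 δm hδm0)
  exact squeeze_zero' (Eventually.of_forall fun n => ENNReal.toReal_nonneg) hub hB0
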